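/- Let $U$, $A$ be $k$-algebras, $H = U \otimes A$ an algebra structure satisfying $(u \otimes a)(u' \otimes a') = uu' \otimes aa'$ whenever $a = 1$ or $u' = 1$, and let $\rho : U \to k$, $\chi : A \to k$ be algebra homomorphisms. Define $\Psi : A \otimes U \to k$ by $\Psi(a, u) = (\rho \otimes \chi)((1 \otimes a)(u \otimes 1))$. Then $\Psi$ is $H$-balanced: $\Psi(a \cdot_\rho h, u) = \Psi(a, h \cdot_\chi u)$ for all $a \in A$, $h \in H$, $u \in U$. -/
import Mathlib


open scoped TensorProduct

noncomputable section

variable {K U A H : Type*} [Field K] [Ring U] [Algebra K U] [Ring A] [Algebra K A]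
  [Ring H] [Algebra K H]

/-- `(id ⊗ χ) : U ⊗ A → U`. -/
def idTensorChi (χ : A →ₐ[K] K) : U ⊗[K] A →ₗ[K] U :=
  (TensorProduct.rid K U).toLinearMap ∘ₗ TensorProduct.map LinearMap.id χ.toLinearMap

/-- `(ρ ⊗ id) : U ⊗ A → A`. -/
def rhoTensorId (ρ : U →ₐ[K] K) : U ⊗[K] A →ₗ[K] A :=
  (TensorProduct.lid K A).toLinearMap ∘ₗ TensorProduct.map ρ.toLinearMap LinearMap.id

/-- The left action of `H` on `U_χ ≅ H ⊗_A k`:  `h ·_χ u' = (id ⊗ χ)(h · (u' ⊗ 1))`. -/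
def actChi (φ : (U ⊗[K] A) ≃ₗ[K] H) (χ : A →ₐ[K] K) (h : H) (u : U) : U :=
  idTensorChi χ (φ.symm (h * φ (u ⊗ₜ[K] (1 : A))))

/-- The right action of `H` on `A_ρ ≅ k ⊗_U H`:  `a ·_ρ h = (ρ ⊗ id)((1 ⊗ a) · h)`. -/
def actRho (φ : (U ⊗[K] A) ≃ₗ[K] H) (ρ : U →ₐ[K] K) (a : A) (h : H) : A :=
  rhoTensorId ρ (φ.symm (φ ((1 : U) ⊗ₜ[K] a) * h))

/-- The bilinear form `Ψ(a, u) = (ρ ⊗ χ)((1 ⊗ a)(u ⊗ 1))`. -/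
def PsiForm (φ : (U ⊗[K] A) ≃ₗ[K] H) (ρ : U →ₐ[K] K) (χ : A →ₐ[K] K)
    (a : A) (u : U) : K :=
  ρ (idTensorChi χ (φ.symm (φ ((1 : U) ⊗ₜ[K] a) * φ (u ⊗ₜ[K] (1 : A)))))

section Aux

variable {K U A H : Type*} [Field K] [Ring U] [Algebra K U] [Ring A] [Algebra K A]
  [Ring H] [Algebra K H]

/-- The composite `(ρ ⊗ χ) : U ⊗ A → K`. -/
def psiF (ρ : U →ₐ[K] K) (χ : A →ₐ[K] K) : U ⊗[K] A →ₗ[K] K :=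
  ρ.toLinearMap ∘ₗ idTensorChi χ

lemma psiF_tmul (ρ : U →ₐ[K] K) (χ : A →ₐ[K] K) (u : U) (a : A) :
    psiF ρ χ (u ⊗ₜ[K] a) = χ a * ρ u := by
  simp [psiF, idTensorChi, Algebra.smul_def]

lemma idTensorChi_tmul (χ : A →ₐ[K] K) (u : U) (a : A) :
    idTensorChi (U := U) χ (u ⊗ₜ[K] a) = χ a • u := by
  simp [idTensorChi]

lemma rhoTensorId_tmul (ρ : U →ₐ[K] K) (u : U) (a : A) :
    rhoTensorId (A := A) ρ (u ⊗ₜ[K] a) = ρ u • a := by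
  simp [rhoTensorId]

variable (φ : (U ⊗[K] A) ≃ₗ[K] H)
    (hmul1 : ∀ (u u' : U) (a' : A),
      φ (u ⊗ₜ[K] (1 : A)) * φ (u' ⊗ₜ[K] a') = φ ((u * u') ⊗ₜ[K] a'))
    (hmul2 : ∀ (u : U) (a a' : A),
      φ (u ⊗ₜ[K] a) * φ ((1 : U) ⊗ₜ[K] a') = φ (u ⊗ₜ[K] (a * a')))
    (ρ : U →ₐ[K] K) (χ : A →ₐ[K] K)

include hmul2 in
lemma lemB (s : U ⊗[K] A) (a' : A) :
    psiF ρ χ (φ.symm (φ s * φ ((1 : U) ⊗ₜ[K] a'))) = χ a' * psiF ρ χ (φ.symm (φ s)) := by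
  induction s using TensorProduct.induction_on with
  | zero => simp
  | tmul u a =>
      rw [hmul2, φ.symm_apply_apply, φ.symm_apply_apply, psiF_tmul, psiF_tmul, map_mul]
      ring
  | add x y hx hy =>
      simp only [map_add, add_mul, mul_add] at *
      rw [hx, hy]

include hmul2 in
lemma lemB' (y : H) (a' : A) :
    psiF ρ χ (φ.symm (y * φ ((1 : U) ⊗ₜ[K] a'))) = χ a' * psiF ρ χ (φ.symm y) := by
  have := lemB φ hmul2 ρ χ (φ.symm y) a'
  rwa [φ.apply_symm_apply] at this

include hmul1 in
lemma lemD (u' : U) (t : U ⊗[K] A) :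
    psiF ρ χ (φ.symm (φ (u' ⊗ₜ[K] (1 : A)) * φ t)) = ρ u' * psiF ρ χ (φ.symm (φ t)) := by
  induction t using TensorProduct.induction_on with
  | zero => simp
  | tmul u a =>
      rw [hmul1, φ.symm_apply_apply, φ.symm_apply_apply, psiF_tmul, psiF_tmul, map_mul]
      ring
  | add x y hx hy =>
      simp only [map_add, add_mul, mul_add] at *
      rw [hx, hy]

include hmul1 in
lemma lemD' (u' : U) (y : H) :
    psiF ρ χ (φ.symm (φ (u' ⊗ₜ[K] (1 : A)) * y)) = ρ u' * psiF ρ χ (φ.symm y) := by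
  have := lemD φ hmul1 ρ χ u' (φ.symm y)
  rwa [φ.apply_symm_apply] at this

include hmul2 in
lemma lemA (t : U ⊗[K] A) (x : H) :
    psiF ρ χ (φ.symm (x * φ ((idTensorChi χ t) ⊗ₜ[K] (1 : A)))) =
      psiF ρ χ (φ.symm (x * φ t)) := by
  induction t using TensorProduct.induction_on with
  | zero => simp
  | tmul u' a' =>
      have h1 : φ (u' ⊗ₜ[K] a') = φ (u' ⊗ₜ[K] (1 : A)) * φ ((1 : U) ⊗ₜ[K] a') := by
        rw [hmul2, one_mul]
      rw [idTensorChi_tmul, ← TensorProduct.smul_tmul', map_smul, mul_smul_comm, map_smul,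
        map_smul, h1, ← mul_assoc, lemB' φ hmul2 ρ χ, Algebra.smul_def]
      simp [mul_comm]
  | add x' y hx hy =>
      simp only [map_add, TensorProduct.add_tmul, mul_add] at *
      rw [hx, hy]

include hmul1 hmul2 in
lemma lemC (s : U ⊗[K] A) (z : H) :
    psiF ρ χ (φ.symm (φ ((1 : U) ⊗ₜ[K] (rhoTensorId ρ s)) * z)) =
      psiF ρ χ (φ.symm (φ s * z)) := by
  induction s using TensorProduct.induction_on with
  | zero => simp
  | tmul u' a' =>
      have h1 : φ (u' ⊗ₜ[K] a') = φ (u' ⊗ₜ[K] (1 : A)) * φ ((1 : U) ⊗ₜ[K] a') := by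
        rw [hmul2, one_mul]
      rw [rhoTensorId_tmul, TensorProduct.tmul_smul, map_smul, smul_mul_assoc, map_smul,
        map_smul, h1, mul_assoc, lemD' φ hmul1 ρ χ, Algebra.smul_def]
      simp [mul_comm]
  | add x y hx hy =>
      simp only [map_add, TensorProduct.tmul_add, add_mul] at *
      rw [hx, hy]

end Aux

/-- the form `Ψ` is `H`-balanced. -/
theorem stmt_13
    (φ : (U ⊗[K] A) ≃ₗ[K] H)
    (hone : φ ((1 : U) ⊗ₜ[K] (1 : A)) = 1)
    (hmul1 : ∀ (u u' : U) (a' : A),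
      φ (u ⊗ₜ[K] (1 : A)) * φ (u' ⊗ₜ[K] a') = φ ((u * u') ⊗ₜ[K] a'))
    (hmul2 : ∀ (u : U) (a a' : A),
      φ (u ⊗ₜ[K] a) * φ ((1 : U) ⊗ₜ[K] a') = φ (u ⊗ₜ[K] (a * a')))
    (ρ : U →ₐ[K] K) (χ : A →ₐ[K] K) :
    ∀ (a : A) (h : H) (u : U),
      PsiForm φ ρ χ (actRho φ ρ a h) u = PsiForm φ ρ χ a (actChi φ χ h u) := by
  intro a h u
  show psiF ρ χ (φ.symm (φ ((1:U) ⊗ₜ[K] (rhoTensorId ρ (φ.symm (φ ((1:U) ⊗ₜ[K] a) * h)))) * φ (u ⊗ₜ[K] (1:A)))) =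
    psiF ρ χ (φ.symm (φ ((1:U) ⊗ₜ[K] a) * φ ((idTensorChi χ (φ.symm (h * φ (u ⊗ₜ[K] (1:A))))) ⊗ₜ[K] (1:A))))
  rw [lemC φ hmul1 hmul2 ρ χ, lemA φ hmul2 ρ χ, φ.apply_symm_apply, φ.apply_symm_apply, mul_assoc]
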